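/- arXiv:2304.14181 — 7 statements merged into one kernel-verified Lean document; each statement's English description precedes it below -/
import Mathlib

section
/- The canonical map A → End_S(T) sending a ∈ A to the map (t ↦ t·a) is a bijective K-algebra anti-homomorphism; that is, it is a K-algebra isomorphism from A onto the opposite algebra End_S(T)^{op} of the algebra of S-linear endomorphisms of the left S-module T. In particular, End_S(T) is isomorphic to A. -/
section

variable {K A T : Type*} [Field K] [Ring A] [Algebra K A]
variable [AddCommGroup T] [Module Aᵐᵒᵖ T] [Module K T] [IsScalarTower K Aᵐᵒᵖ T]

/-- `K` acts on `T` compatibly with the evaluation action of `S = End_A(T)`. -/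
instance : SMulCommClass (Module.End Aᵐᵒᵖ T) K T := SMulCommClass.symm _ _ _

instance : IsScalarTower K (Module.End Aᵐᵒᵖ T) T :=
  ⟨fun _ _ _ => rfl⟩

/-- Let `K` be a field, `A` a finite-dimensional self-injective
`K`-algebra, and `T` a finite-dimensional faithful right `A`-module.  With
`S := End_A(T)` acting on `T` on the left by evaluation, the canonical map
`A → End_S(T)`, `a ↦ (t ↦ t·a)`, is a bijective `K`-algebra anti-homomorphism, i.e. a
`K`-algebra isomorphism from `A` onto `End_S(T)ᵐᵒᵖ`.  In particular `End_S(T) ≅ A`. -/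
theorem double_centralizer_of_selfinjective
    [FiniteDimensional K A] [FiniteDimensional K T]
    (hselfinj : Module.Injective Aᵐᵒᵖ A)
    (hfaithful : ∀ a : A, (∀ t : T, MulOpposite.op a • t = 0) → a = 0) :
    ∃ e : A ≃ₐ[K] (Module.End (Module.End Aᵐᵒᵖ T) T)ᵐᵒᵖ,
      ∀ (a : A) (t : T), ((e a).unop : T →ₗ[Module.End Aᵐᵒᵖ T] T) t =
        MulOpposite.op a • t := by
  classical
  -- the canonical map as an `AlgHom`
  set S := Module.End Aᵐᵒᵖ T with hS
  have smul_def : ∀ (f : S) (t : T), f • t = f t := fun _ _ => rfl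
  let φ₀ : A → Module.End S T := fun a =>
    { toFun := fun t => MulOpposite.op a • t
      map_add' := fun x y => smul_add _ x y
      map_smul' := fun f t => by
        simp only [RingHom.id_apply, smul_def]
        exact (f.map_smul (MulOpposite.op a) t).symm }
  have φ₀_apply : ∀ (a : A) (t : T), φ₀ a t = MulOpposite.op a • t := fun _ _ => rfl
  let Φ : A →ₐ[K] (Module.End S T)ᵐᵒᵖ :=
    { toFun := fun a => MulOpposite.op (φ₀ a)
      map_one' := by
        apply congrArg MulOpposite.op
        apply LinearMap.ext; intro t
        simp [φ₀_apply]
      map_mul' := fun a b => by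
        rw [← MulOpposite.op_mul]
        apply congrArg MulOpposite.op
        apply LinearMap.ext; intro t
        show MulOpposite.op (a * b) • t = φ₀ b (φ₀ a t)
        simp only [φ₀_apply, MulOpposite.op_mul, mul_smul]
      map_zero' := by
        apply congrArg MulOpposite.op
        apply LinearMap.ext; intro t
        simp [φ₀_apply]
      map_add' := fun a b => by
        rw [← MulOpposite.op_add]
        apply congrArg MulOpposite.op
        apply LinearMap.ext; intro t
        show MulOpposite.op (a + b) • t = φ₀ a t + φ₀ b t
        simp only [φ₀_apply, MulOpposite.op_add, add_smul]
      commutes' := fun k => by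
        rw [MulOpposite.algebraMap_apply]
        apply congrArg MulOpposite.op
        apply LinearMap.ext; intro t
        show MulOpposite.op (algebraMap K A k) • t = algebraMap K (Module.End S T) k t
        rw [Module.algebraMap_end_apply, ← MulOpposite.algebraMap_apply,
          IsScalarTower.algebraMap_smul] }
  have Φ_apply : ∀ (a : A) (t : T), (Φ a).unop t = MulOpposite.op a • t := fun _ _ => rfl
  -- injectivity
  have hinj : Function.Injective Φ := by
    intro a b hab
    have h : ∀ t : T, MulOpposite.op (a - b) • t = 0 := by
      intro t
      have := congrArg (fun f => (MulOpposite.unop f) t) hab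
      simp only [Φ_apply] at this
      rw [MulOpposite.op_sub, sub_smul]
      exact sub_eq_zero.mpr this
    have := hfaithful _ h
    exact sub_eq_zero.mp this
  -- surjectivity
  have hsurj : Function.Surjective Φ := by
    haveI := hselfinj
    intro gop
    set g := gop.unop with hg
    suffices h : ∃ a : A, ∀ t : T, MulOpposite.op a • t = g t by
      obtain ⟨a, ha⟩ := h
      refine ⟨a, ?_⟩
      rw [← MulOpposite.op_unop gop]
      apply congrArg MulOpposite.op
      exact LinearMap.ext fun t => ha t
    set n := Module.finrank K T with hn
    let b : Module.Basis (Fin n) K T := Module.finBasis K T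
    let ψ : A →ₗ[Aᵐᵒᵖ] (Fin n → T) :=
      { toFun := fun a i => MulOpposite.op a • b i
        map_add' := fun x y => funext fun i => by
          simp only [MulOpposite.op_add, add_smul, Pi.add_apply]
        map_smul' := fun y x => funext fun i => by
          simp only [RingHom.id_apply, Pi.smul_apply]
          rw [MulOpposite.smul_eq_mul_unop, MulOpposite.op_mul, MulOpposite.op_unop, mul_smul] }
    have hψ : Function.Injective ψ := by
      intro x y hxy
      have h0 : ∀ i, MulOpposite.op (x - y) • b i = 0 := by
        intro i
        have := congrFun hxy i
        simp only [ψ, LinearMap.coe_mk, AddHom.coe_mk] at this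
        rw [MulOpposite.op_sub, sub_smul, this, sub_self]
      have hall : ∀ t : T, MulOpposite.op (x - y) • t = 0 := by
        let l : T →ₗ[K] T :=
          { toFun := fun u => MulOpposite.op (x - y) • u
            map_add' := fun u v => smul_add _ u v
            map_smul' := fun k u => smul_comm _ k u }
        have hl : l = 0 := b.ext fun i => h0 i
        exact fun t => LinearMap.congr_fun hl t
      exact sub_eq_zero.mp (hfaithful _ hall)
    obtain ⟨π, hπ⟩ :=
      Module.Injective.extension_property Aᵐᵒᵖ A A (Fin n → T) ψ hψ LinearMap.id
    have key : ∀ (h : (Fin n → T) →ₗ[Aᵐᵒᵖ] T) (v : Fin n → T),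
        h (fun i => g (v i)) = g (h v) := by
      intro h v
      calc h (fun i => g (v i)) = h (∑ i, Pi.single i (g (v i))) := by
            congr 1; exact (Finset.univ_sum_single _).symm
        _ = ∑ i, h (Pi.single i (g (v i))) := map_sum h _ _
        _ = ∑ i, g (h (Pi.single i (v i))) := by
            refine Finset.sum_congr rfl fun i _ => ?_
            exact (g.map_smul (h ∘ₗ LinearMap.single Aᵐᵒᵖ (fun _ => T) i) (v i)).symm
        _ = g (∑ i, h (Pi.single i (v i))) := (map_sum g _ _).symm
        _ = g (h v) := by
            rw [← map_sum h]
            congr 1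
            exact congrArg h (Finset.univ_sum_single v)
    refine ⟨π (fun i => g (ψ 1 i)), fun t => ?_⟩
    let ρ : A →ₗ[Aᵐᵒᵖ] T :=
      { toFun := fun x => MulOpposite.op x • t
        map_add' := fun x y => by
          show MulOpposite.op (x + y) • t = MulOpposite.op x • t + MulOpposite.op y • t
          rw [MulOpposite.op_add, add_smul]
        map_smul' := fun y x => by
          show MulOpposite.op (y • x) • t = y • MulOpposite.op x • t
          rw [MulOpposite.smul_eq_mul_unop, MulOpposite.op_mul, MulOpposite.op_unop, mul_smul] }
    have hk := key (ρ ∘ₗ π) (ψ 1)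
    simp only [LinearMap.comp_apply] at hk
    have hπ1 : π (ψ 1) = 1 := LinearMap.congr_fun hπ 1
    rw [hπ1] at hk
    calc MulOpposite.op (π fun i => g (ψ 1 i)) • t = ρ (π fun i => g (ψ 1 i)) := rfl
      _ = g (ρ 1) := hk
      _ = g t := by
          congr 1
          show MulOpposite.op (1 : A) • t = t
          rw [MulOpposite.op_one, one_smul]
  exact ⟨AlgEquiv.ofBijective Φ ⟨hinj, hsurj⟩, fun a t => Φ_apply a t⟩

end
end

section
/- T is projective as a left S-module. -/
/-- Let `K` be a commutative ring, `A` an associative unital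
`K`-algebra, `T` a right `A`-module (a module over `Aᵐᵒᵖ`), and
`S := End_A(T)` the ring of right-`A`-module endomorphisms of `T`, acting on `T` on the
left by evaluation.  If `T ≅ A ⊕ Q` as right `A`-modules for some right `A`-module `Q`,
then `T` is projective as a left `S`-module. -/
theorem projective_over_endomorphism_ring
    {K A : Type*} [CommRing K] [Ring A] [Algebra K A]
    {T Q : Type*} [AddCommGroup T] [Module Aᵐᵒᵖ T] [AddCommGroup Q] [Module Aᵐᵒᵖ Q]
    (iso : T ≃ₗ[Aᵐᵒᵖ] (A × Q)) :
    Module.Projective (Module.End Aᵐᵒᵖ T) T := by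
  set S := Module.End Aᵐᵒᵖ T
  set π : T →ₗ[Aᵐᵒᵖ] A := (LinearMap.fst Aᵐᵒᵖ A Q).comp iso.toLinearMap with hπ
  set e : T := iso.symm (1, 0) with he
  have hπe : π e = 1 := by simp [hπ, he]
  -- for each t : T, the A-linear map x ↦ op (π x) • t
  have φt_smul : ∀ (t : T) (a : Aᵐᵒᵖ) (x : T),
      MulOpposite.op (π (a • x)) • t = a • (MulOpposite.op (π x) • t) := by
    intro t a x
    rw [map_smul]
    have : MulOpposite.op ((a • π x : A)) = a * MulOpposite.op (π x) := by
      rw [MulOpposite.smul_eq_mul_unop, MulOpposite.op_mul, MulOpposite.op_unop]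
    rw [this, mul_smul]
  let φt : T → S := fun t =>
    { toFun := fun x => MulOpposite.op (π x) • t
      map_add' := fun x y => by simp [map_add, add_smul]
      map_smul' := fun a x => φt_smul t a x }
  have φt_apply : ∀ (t x : T), φt t x = MulOpposite.op (π x) • t := fun _ _ => rfl
  let φ : T →ₗ[S] S :=
    { toFun := φt
      map_add' := fun t t' => by
        apply LinearMap.ext; intro x
        show φt (t + t') x = φt t x + φt t' x
        simp only [φt_apply, smul_add]
      map_smul' := fun s t => by
        apply LinearMap.ext; intro x
        show MulOpposite.op (π x) • (s t) = s (MulOpposite.op (π x) • t)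
        rw [map_smul] }
  let ev : S →ₗ[S] T :=
    { toFun := fun s => s e
      map_add' := fun s s' => rfl
      map_smul' := fun s s' => rfl }
  refine Module.Projective.of_split φ ev ?_
  apply LinearMap.ext; intro t
  show φt t e = t
  rw [φt_apply, hπe, MulOpposite.op_one, one_smul]
end

section
/- For all natural numbers i, j ≥ 0, ρ(X^i ⊗ X^j) = ( Σ_{k=0}^{i−1} X^k ⊗ X^{i+j−1−k} − Σ_{k=0}^{j−1} X^k ⊗ X^{i+j−1−k} ) · β. (The parenthesized element is the Demazure operator value ∂(X^i ⊗ X^j) = (X^i ⊗ X^j − X^j ⊗ X^i)/(X ⊗ 1 − 1 ⊗ X).) -/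
open scoped TensorProduct

/-- Let `K` be a commutative ring, `B` an associative unital `K`-algebra and
`X ∈ B`.  Let `σ` be the flip on `B ⊗[K] B` and let `ρ` be a `K`-linear endomorphism of
`B ⊗[K] B` satisfying the `σ`-twisted Leibniz rule.  Set `β := ρ (X ⊗ 1)`.  Assume `ρ (X ⊗ 1)`
and `ρ (1 ⊗ X)` commute with both `X ⊗ 1` and `1 ⊗ X`, and that `X ⊗ 1 − 1 ⊗ X` is a
non-zero-divisor in `B ⊗[K] B`.  Then for all natural numbers `i, j ≥ 0`,
`ρ (Xⁱ ⊗ Xʲ) = (∑_{k<i} Xᵏ ⊗ X^{i+j−1−k} − ∑_{k<j} Xᵏ ⊗ X^{i+j−1−k}) · β`. -/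
theorem rho_eq_demazure_mul_beta
    {K B : Type*} [CommRing K] [Ring B] [Algebra K B] (X : B)
    (ρ : B ⊗[K] B →ₗ[K] B ⊗[K] B)
    (hLeib : ∀ u v : B ⊗[K] B,
      ρ (u * v) = (TensorProduct.comm K B B) u * ρ v + ρ u * v)
    (hc1 : Commute (ρ (X ⊗ₜ[K] 1)) (X ⊗ₜ[K] 1))
    (hc2 : Commute (ρ (X ⊗ₜ[K] 1)) ((1 : B) ⊗ₜ[K] X))
    (hc3 : Commute (ρ ((1 : B) ⊗ₜ[K] X)) (X ⊗ₜ[K] 1))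
    (hc4 : Commute (ρ ((1 : B) ⊗ₜ[K] X)) ((1 : B) ⊗ₜ[K] X))
    (hregL : ∀ u : B ⊗[K] B, (X ⊗ₜ[K] 1 - (1 : B) ⊗ₜ[K] X) * u = 0 → u = 0)
    (hregR : ∀ u : B ⊗[K] B, u * (X ⊗ₜ[K] 1 - (1 : B) ⊗ₜ[K] X) = 0 → u = 0) :
    ∀ i j : ℕ,
      ρ ((X ^ i) ⊗ₜ[K] (X ^ j)) =
        ((∑ k ∈ Finset.range i, (X ^ k) ⊗ₜ[K] (X ^ (i + j - 1 - k))) -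
          ∑ k ∈ Finset.range j, (X ^ k) ⊗ₜ[K] (X ^ (i + j - 1 - k))) * ρ (X ⊗ₜ[K] 1) := by
  set a : B ⊗[K] B := X ⊗ₜ[K] 1 with ha
  set b : B ⊗[K] B := (1 : B) ⊗ₜ[K] X with hb
  set β : B ⊗[K] B := ρ a with hβ
  -- ρ b = -β
  have hab : a * b = b * a := by
    simp [ha, hb, Algebra.TensorProduct.tmul_mul_tmul]
  have hσa : (TensorProduct.comm K B B) a = b := by
    simp [ha, hb, TensorProduct.comm_tmul]
  have hσb : (TensorProduct.comm K B B) b = a := by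
    simp [ha, hb, TensorProduct.comm_tmul]
  have h1 := hLeib a b
  have h2 := hLeib b a
  rw [hσa] at h1
  rw [hσb, ← hab] at h2
  have key : (ρ a + ρ b) * (a - b) = 0 := by
    have h3 : b * ρ b + ρ a * b = a * ρ a + ρ b * a := h1.symm.trans h2
    rw [← hc4.eq, ← hc1.eq] at h3
    calc (ρ a + ρ b) * (a - b) = (ρ a * a + ρ b * a) - (ρ a * b + ρ b * b) := by noncomm_ring
      _ = 0 := by rw [← h3]; noncomm_ring
  have hρb : ρ b = -β := by
    have h0 := hregR (ρ a + ρ b) key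
    exact eq_neg_of_add_eq_zero_right h0
  have hρ1 : ρ (1 : B ⊗[K] B) = 0 := by
    have h := hLeib 1 1
    rw [mul_one, Algebra.TensorProduct.one_def, TensorProduct.comm_tmul,
      ← Algebra.TensorProduct.one_def, one_mul, mul_one] at h
    have := right_eq_add.mp h
    simpa using this
  have L1 : ∀ i : ℕ, ρ ((X ^ i) ⊗ₜ[K] (1 : B)) =
      (∑ k ∈ Finset.range i, (X ^ k) ⊗ₜ[K] (X ^ (i - 1 - k))) * β := by
    intro i
    induction i with
    | zero => simp [← Algebra.TensorProduct.one_def, hρ1]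
    | succ n ih =>
      have hmul : (X ^ (n + 1)) ⊗ₜ[K] (1 : B) = ((X ^ n) ⊗ₜ[K] (1 : B)) * a := by
        simp [ha, Algebra.TensorProduct.tmul_mul_tmul, pow_succ]
      rw [hmul, hLeib, TensorProduct.comm_tmul, ih, ← hβ, mul_assoc, hc1.eq, ← mul_assoc,
        Finset.sum_mul]
      have hsum : ∑ k ∈ Finset.range (n + 1), (X ^ k) ⊗ₜ[K] (X ^ (n + 1 - 1 - k)) =
          (∑ k ∈ Finset.range n, (X ^ k) ⊗ₜ[K] (X ^ (n - 1 - k)) * a) +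
            (1 : B) ⊗ₜ[K] (X ^ n) := by
        rw [Finset.sum_range_succ']
        congr 1
        · refine Finset.sum_congr rfl fun k hk => ?_
          rw [ha, Algebra.TensorProduct.tmul_mul_tmul, mul_one, ← pow_succ]
          congr 2
          omega
        · norm_num
      rw [hsum, add_mul]
      abel
  have L2 : ∀ j : ℕ, ρ ((1 : B) ⊗ₜ[K] (X ^ j)) =
      -((∑ k ∈ Finset.range j, (X ^ k) ⊗ₜ[K] (X ^ (j - 1 - k))) * β) := by
    intro j
    induction j with
    | zero => simp [← Algebra.TensorProduct.one_def, hρ1]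
    | succ n ih =>
      have hmul : (1 : B) ⊗ₜ[K] (X ^ (n + 1)) = ((1 : B) ⊗ₜ[K] (X ^ n)) * b := by
        simp [hb, Algebra.TensorProduct.tmul_mul_tmul, pow_succ]
      rw [hmul, hLeib, TensorProduct.comm_tmul, ih, hρb]
      rw [neg_mul, mul_assoc, hc2.eq, ← mul_assoc, Finset.sum_mul]
      have hsum : ∑ k ∈ Finset.range (n + 1), (X ^ k) ⊗ₜ[K] (X ^ (n + 1 - 1 - k)) =
          (∑ k ∈ Finset.range n, (X ^ k) ⊗ₜ[K] (X ^ (n - 1 - k)) * b) +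
            (X ^ n) ⊗ₜ[K] (1 : B) := by
        rw [Finset.sum_range_succ]
        congr 1
        · refine Finset.sum_congr rfl fun k hk => ?_
          rw [hb, Algebra.TensorProduct.tmul_mul_tmul, mul_one, ← pow_succ]
          congr 2
          simp only [Finset.mem_range] at hk
          omega
        · norm_num
      rw [hsum, add_mul]
      noncomm_ring
  intro i j
  have hmul : (X ^ i) ⊗ₜ[K] (X ^ j) = ((X ^ i) ⊗ₜ[K] (1 : B)) * ((1 : B) ⊗ₜ[K] (X ^ j)) := by
    rw [Algebra.TensorProduct.tmul_mul_tmul, mul_one, one_mul]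
  rw [hmul, hLeib, TensorProduct.comm_tmul, L1, L2]
  have hbj : Commute β ((1 : B) ⊗ₜ[K] (X ^ j)) := by
    have := hc2.pow_right j
    rwa [hb, Algebra.TensorProduct.tmul_pow, one_pow] at this
  have hA : ((∑ k ∈ Finset.range i, (X ^ k) ⊗ₜ[K] (X ^ (i - 1 - k))) * β) *
      ((1 : B) ⊗ₜ[K] (X ^ j)) =
      ((∑ k ∈ Finset.range i, (X ^ k) ⊗ₜ[K] (X ^ (i - 1 - k))) * ((1 : B) ⊗ₜ[K] (X ^ j))) * β := by
    rw [mul_assoc, hbj.eq, ← mul_assoc]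
  have hB : ((1 : B) ⊗ₜ[K] (X ^ i)) *
      -((∑ k ∈ Finset.range j, (X ^ k) ⊗ₜ[K] (X ^ (j - 1 - k))) * β) =
      -((((1 : B) ⊗ₜ[K] (X ^ i)) *
        (∑ k ∈ Finset.range j, (X ^ k) ⊗ₜ[K] (X ^ (j - 1 - k)))) * β) := by
    rw [mul_neg, ← mul_assoc]
  rw [hA, hB, Finset.sum_mul, Finset.mul_sum]
  have e1 : ∑ k ∈ Finset.range i, (X ^ k) ⊗ₜ[K] (X ^ (i - 1 - k)) * ((1 : B) ⊗ₜ[K] (X ^ j)) =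
      ∑ k ∈ Finset.range i, (X ^ k) ⊗ₜ[K] (X ^ (i + j - 1 - k)) := by
    refine Finset.sum_congr rfl fun k hk => ?_
    simp only [Finset.mem_range] at hk
    rw [Algebra.TensorProduct.tmul_mul_tmul, mul_one, ← pow_add]
    congr 2
    omega
  have e2 : ∑ k ∈ Finset.range j, ((1 : B) ⊗ₜ[K] (X ^ i)) * ((X ^ k) ⊗ₜ[K] (X ^ (j - 1 - k))) =
      ∑ k ∈ Finset.range j, (X ^ k) ⊗ₜ[K] (X ^ (i + j - 1 - k)) := by
    refine Finset.sum_congr rfl fun k hk => ?_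
    simp only [Finset.mem_range] at hk
    rw [Algebra.TensorProduct.tmul_mul_tmul, one_mul, ← pow_add]
    congr 2
    omega
  rw [e1, e2, sub_mul]
  noncomm_ring
end

section
/- For every integer i ≥ 1, ρ(X^i ⊗ 1) = ( Σ_{k=0}^{i−1} X^k ⊗ X^{i−1−k} ) · β and ρ(1 ⊗ X^i) = −( Σ_{k=0}^{i−1} X^k ⊗ X^{i−1−k} ) · β; in particular ρ(X^i ⊗ 1) = −ρ(1 ⊗ X^i). -/
open scoped TensorProduct

/-- In the Demazure-operator setting for a twisted derivation `ρ` on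
`B ⊗[K] B` (with `σ` the flip, `β := ρ (X ⊗ 1)`, commutation assumptions, and
`X ⊗ 1 − 1 ⊗ X` a non-zero-divisor), for every integer `i ≥ 1` one has
`ρ (Xⁱ ⊗ 1) = (∑_{k<i} Xᵏ ⊗ X^{i−1−k}) · β`,
`ρ (1 ⊗ Xⁱ) = −(∑_{k<i} Xᵏ ⊗ X^{i−1−k}) · β`; in particular
`ρ (Xⁱ ⊗ 1) = −ρ (1 ⊗ Xⁱ)`. -/
theorem rho_pow_tmul_one
    {K B : Type*} [CommRing K] [Ring B] [Algebra K B] (X : B)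
    (ρ : B ⊗[K] B →ₗ[K] B ⊗[K] B)
    (hLeib : ∀ u v : B ⊗[K] B,
      ρ (u * v) = (TensorProduct.comm K B B) u * ρ v + ρ u * v)
    (hc1 : Commute (ρ (X ⊗ₜ[K] 1)) (X ⊗ₜ[K] 1))
    (hc2 : Commute (ρ (X ⊗ₜ[K] 1)) ((1 : B) ⊗ₜ[K] X))
    (hc3 : Commute (ρ ((1 : B) ⊗ₜ[K] X)) (X ⊗ₜ[K] 1))
    (hc4 : Commute (ρ ((1 : B) ⊗ₜ[K] X)) ((1 : B) ⊗ₜ[K] X))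
    (hregL : ∀ u : B ⊗[K] B, (X ⊗ₜ[K] 1 - (1 : B) ⊗ₜ[K] X) * u = 0 → u = 0)
    (hregR : ∀ u : B ⊗[K] B, u * (X ⊗ₜ[K] 1 - (1 : B) ⊗ₜ[K] X) = 0 → u = 0) :
    ∀ i : ℕ, 1 ≤ i →
      ρ ((X ^ i) ⊗ₜ[K] 1) =
          (∑ k ∈ Finset.range i, (X ^ k) ⊗ₜ[K] (X ^ (i - 1 - k))) * ρ (X ⊗ₜ[K] 1) ∧
        ρ ((1 : B) ⊗ₜ[K] (X ^ i)) =
          -((∑ k ∈ Finset.range i, (X ^ k) ⊗ₜ[K] (X ^ (i - 1 - k))) * ρ (X ⊗ₜ[K] 1)) ∧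
        ρ ((X ^ i) ⊗ₜ[K] 1) = - ρ ((1 : B) ⊗ₜ[K] (X ^ i)) := by
  set β := ρ (X ⊗ₜ[K] 1) with hβ
  set a := ρ ((1 : B) ⊗ₜ[K] X) with ha
  -- first: a = -β
  have h1 := hLeib (X ⊗ₜ[K] (1:B)) ((1:B) ⊗ₜ[K] X)
  have h2 := hLeib ((1:B) ⊗ₜ[K] X) (X ⊗ₜ[K] (1:B))
  rw [Algebra.TensorProduct.tmul_mul_tmul, mul_one, one_mul, TensorProduct.comm_tmul] at h1
  rw [Algebra.TensorProduct.tmul_mul_tmul, mul_one, one_mul, TensorProduct.comm_tmul] at h2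
  have e2 : (X ⊗ₜ[K] (1:B)) * β = ρ (X ⊗ₜ[K] X) - (X ⊗ₜ[K] (1:B)) * a := by
    rw [h2, hc3.eq]; abel
  have e1 : ((1:B) ⊗ₜ[K] X) * a = ρ (X ⊗ₜ[K] X) - ((1:B) ⊗ₜ[K] X) * β := by
    rw [h1, hc2.eq]; abel
  have key : (X ⊗ₜ[K] (1:B) - (1:B) ⊗ₜ[K] X) * (a + β) = 0 := by
    rw [sub_mul, mul_add, mul_add, e2, e1]; abel
  have hneg : a = -β := by
    have h0 := hregL _ key
    exact eq_neg_of_add_eq_zero_left h0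
  -- powers as powers in the tensor ring
  have hpowL : ∀ k : ℕ, (X ^ k) ⊗ₜ[K] (1:B) = (X ⊗ₜ[K] (1:B)) ^ k := by
    intro k
    induction k with
    | zero => simp [Algebra.TensorProduct.one_def]
    | succ n ih =>
        rw [pow_succ, pow_succ, ← ih, Algebra.TensorProduct.tmul_mul_tmul, mul_one]
  have hpowR : ∀ k : ℕ, (1:B) ⊗ₜ[K] (X ^ k) = ((1:B) ⊗ₜ[K] X) ^ k := by
    intro k
    induction k with
    | zero => simp [Algebra.TensorProduct.one_def]
    | succ n ih =>
        rw [pow_succ, pow_succ, ← ih, Algebra.TensorProduct.tmul_mul_tmul, mul_one]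
  have hβcomm : ∀ k m : ℕ, Commute β ((X ^ k) ⊗ₜ[K] (X ^ m)) := by
    intro k m
    have h : (X ^ k) ⊗ₜ[K] (X ^ m)
        = ((X ^ k) ⊗ₜ[K] (1:B)) * ((1:B) ⊗ₜ[K] (X ^ m)) := by
      rw [Algebra.TensorProduct.tmul_mul_tmul, mul_one, one_mul]
    rw [h, hpowL, hpowR]
    exact (hc1.pow_right k).mul_right (hc2.pow_right m)
  intro i hi
  induction i, hi using Nat.le_induction with
  | base =>
      have h10 : (∑ k ∈ Finset.range 1, (X ^ k) ⊗ₜ[K] (X ^ (1 - 1 - k)))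
          = (1 : B ⊗[K] B) := by
        simp [Algebra.TensorProduct.one_def]
      refine ⟨?_, ?_, ?_⟩ <;> rw [pow_one]
      · rw [h10, one_mul]
      · rw [h10, one_mul, ← ha, hneg]
      · rw [← ha, hneg, neg_neg]
  | succ i hi ih =>
      obtain ⟨ih1, ih2, _⟩ := ih
      set S := ∑ k ∈ Finset.range i, (X ^ k) ⊗ₜ[K] (X ^ (i - 1 - k)) with hS
      have hSβ : ∀ u : B ⊗[K] B, Commute β u → S * β * u = S * u * β := by
        intro u hu
        rw [mul_assoc, hu.eq, ← mul_assoc]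
      -- the sum for i+1
      have hsum1 : (∑ k ∈ Finset.range (i+1), (X ^ k) ⊗ₜ[K] (X ^ (i + 1 - 1 - k)))
          = (1:B) ⊗ₜ[K] (X ^ i) + S * (X ⊗ₜ[K] (1:B)) := by
        rw [add_comm ((1:B) ⊗ₜ[K] (X ^ i)) (S * (X ⊗ₜ[K] (1:B))),
          Finset.sum_range_succ', hS, Finset.sum_mul]
        congr 1
        · refine Finset.sum_congr rfl fun k _ => ?_
          rw [Algebra.TensorProduct.tmul_mul_tmul, mul_one, ← pow_succ]
          have he : i + 1 - 1 - (k + 1) = i - 1 - k := by omega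
          rw [he]
        · simp
      have hsum2 : (∑ k ∈ Finset.range (i+1), (X ^ k) ⊗ₜ[K] (X ^ (i + 1 - 1 - k)))
          = (X ^ i) ⊗ₜ[K] (1:B) + S * ((1:B) ⊗ₜ[K] X) := by
        rw [add_comm ((X ^ i) ⊗ₜ[K] (1:B)) (S * ((1:B) ⊗ₜ[K] X)),
          Finset.sum_range_succ, hS, Finset.sum_mul]
        congr 1
        · refine Finset.sum_congr rfl fun k hk => ?_
          rw [Algebra.TensorProduct.tmul_mul_tmul, mul_one, ← pow_succ]
          have he : i + 1 - 1 - k = i - 1 - k + 1 := by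
            have : k < i := Finset.mem_range.mp hk
            omega
          rw [he]
        · simp
      have g1 : ρ ((X ^ (i+1)) ⊗ₜ[K] 1)
          = (∑ k ∈ Finset.range (i+1), (X ^ k) ⊗ₜ[K] (X ^ (i + 1 - 1 - k))) * β := by
        have hmul : (X ^ (i+1)) ⊗ₜ[K] (1:B)
            = ((X ^ i) ⊗ₜ[K] (1:B)) * (X ⊗ₜ[K] (1:B)) := by
          rw [Algebra.TensorProduct.tmul_mul_tmul, mul_one, ← pow_succ]
        rw [hmul, hLeib, TensorProduct.comm_tmul, ih1, hsum1, add_mul,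
          hSβ _ hc1]
      have g2 : ρ ((1:B) ⊗ₜ[K] (X ^ (i+1)))
          = -((∑ k ∈ Finset.range (i+1), (X ^ k) ⊗ₜ[K] (X ^ (i + 1 - 1 - k))) * β) := by
        have hmul : (1:B) ⊗ₜ[K] (X ^ (i+1))
            = ((1:B) ⊗ₜ[K] (X ^ i)) * ((1:B) ⊗ₜ[K] X) := by
          rw [Algebra.TensorProduct.tmul_mul_tmul, mul_one, ← pow_succ]
        rw [hmul, hLeib, TensorProduct.comm_tmul, ih2, ← ha, hneg, hsum2, add_mul,
          mul_neg, neg_mul, neg_add, hSβ _ hc2]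
      exact ⟨g1, g2, by rw [g1, g2, neg_neg]⟩
end

section
/- For all integers a, b, c with N ≥ a ≥ c ≥ 1 and N ≥ b ≥ c, the element D(a,c)·U(c,a) commutes with the element D(b,c)·U(c,b). -/
/-- The descending product `g_a g_{a−1} ⋯ g_c` (for `a ≥ c`). -/
def braidDesc {M : Type*} [Monoid M] (g : ℕ → M) (a c : ℕ) : M :=
  ((List.range (a + 1 - c)).map fun k => g (a - k)).prod

/-- The ascending product `g_c g_{c+1} ⋯ g_a` (for `a ≥ c`). -/
def braidAsc {M : Type*} [Monoid M] (g : ℕ → M) (c a : ℕ) : M :=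
  ((List.range (a + 1 - c)).map fun k => g (c + k)).prod

section
variable {M : Type*} [Monoid M] (g : ℕ → M)

lemma braidDesc_self (c : ℕ) : braidDesc g c c = g c := by
  simp [braidDesc, show List.range 1 = [0] from rfl]

lemma braidAsc_self (c : ℕ) : braidAsc g c c = g c := by
  simp [braidAsc, show List.range 1 = [0] from rfl]

lemma braidDesc_succ_top {a c : ℕ} (h : c ≤ a) :
    braidDesc g (a + 1) c = g (a + 1) * braidDesc g a c := by
  unfold braidDesc
  rw [show a + 1 + 1 - c = (a + 1 - c) + 1 by omega, List.range_succ_eq_map]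
  simp only [List.map_cons, List.prod_cons, Nat.sub_zero, List.map_map]
  congr 2
  apply List.map_congr_left
  intro k _
  simp only [Function.comp]
  congr 1
  omega

lemma braidDesc_bot {a c : ℕ} (h : c ≤ a) :
    braidDesc g a c = braidDesc g a (c + 1) * g c := by
  unfold braidDesc
  rw [show a + 1 - c = (a + 1 - (c + 1)) + 1 by omega, List.range_succ, List.map_append,
    List.prod_append]
  simp only [List.map_cons, List.map_nil, List.prod_cons, List.prod_nil, mul_one]
  congr 2
  omega

lemma braidAsc_succ_top {a c : ℕ} (h : c ≤ a + 1) :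
    braidAsc g c (a + 1) = braidAsc g c a * g (a + 1) := by
  unfold braidAsc
  rw [show a + 1 + 1 - c = (a + 1 - c) + 1 by omega, List.range_succ, List.map_append,
    List.prod_append]
  simp only [List.map_cons, List.map_nil, List.prod_cons, List.prod_nil, mul_one]
  congr 2
  omega

lemma braidAsc_bot {a c : ℕ} (h : c ≤ a) :
    braidAsc g c a = g c * braidAsc g (c + 1) a := by
  unfold braidAsc
  rw [show a + 1 - c = (a + 1 - (c + 1)) + 1 by omega, List.range_succ_eq_map]
  simp only [List.map_cons, List.prod_cons, Nat.add_zero, List.map_map]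
  congr 2
  apply List.map_congr_left
  intro k _
  simp only [Function.comp]
  congr 1
  omega

variable (N : ℕ)
  (hbraid : ∀ k, 1 ≤ k → k + 1 ≤ N →
      g k * g (k + 1) * g k = g (k + 1) * g k * g (k + 1))
  (hcomm : ∀ i j, 1 ≤ i → 1 ≤ j → i ≤ N → j ≤ N →
      (i + 2 ≤ j ∨ j + 2 ≤ i) → g i * g j = g j * g i)

include hcomm in
lemma comm_desc {c j : ℕ} (hc : 1 ≤ c) (hj1 : 1 ≤ j) (hjN : j ≤ N) :
    ∀ a, c ≤ a → a ≤ N → (a + 2 ≤ j ∨ j + 2 ≤ c) → Commute (g j) (braidDesc g a c) := by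
  intro a hca
  induction a, hca using Nat.le_induction with
  | base =>
    intro hcN hfar
    rw [braidDesc_self]
    exact (hcomm c j hc hj1 hcN hjN (hfar.imp id id)).symm
  | succ a hca ih =>
    intro haN hfar
    rw [braidDesc_succ_top g hca]
    refine Commute.mul_right ?_ (ih (by omega) (by omega))
    exact (hcomm (a + 1) j (by omega) hj1 haN hjN (by omega)).symm

include hcomm in
lemma comm_asc {c j : ℕ} (hc : 1 ≤ c) (hj1 : 1 ≤ j) (hjN : j ≤ N) :
    ∀ a, c ≤ a → a ≤ N → (a + 2 ≤ j ∨ j + 2 ≤ c) → Commute (g j) (braidAsc g c a) := by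
  intro a hca
  induction a, hca using Nat.le_induction with
  | base =>
    intro hcN hfar
    rw [braidAsc_self]
    exact (hcomm c j hc hj1 hcN hjN (hfar.imp id id)).symm
  | succ a hca ih =>
    intro haN hfar
    rw [braidAsc_succ_top g (by omega)]
    refine Commute.mul_right (ih (by omega) (by omega)) ?_
    exact (hcomm (a + 1) j (by omega) hj1 haN hjN (by omega)).symm

include hbraid hcomm in
lemma desc_shift {c k : ℕ} (hc : 1 ≤ c) (hck : c ≤ k) :
    ∀ a, k < a → a ≤ N → g k * braidDesc g a c = braidDesc g a c * g (k + 1) := by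
  intro a hka
  induction a, hka using Nat.le_induction with
  | base =>
    intro hkN
    rcases eq_or_lt_of_le hck with rfl | hlt
    · rw [braidDesc_succ_top g le_rfl, braidDesc_self]
      simp only [← mul_assoc]
      exact hbraid c hc hkN
    · obtain ⟨m, rfl⟩ : ∃ m, k = m + 1 := ⟨k - 1, by omega⟩
      have hD : Commute (g (m + 1 + 1)) (braidDesc g m c) :=
        comm_desc g N hcomm hc (by omega) hkN m (by omega) (by omega) (by omega)
      rw [braidDesc_succ_top g (le_of_lt hlt), braidDesc_succ_top g (by omega : c ≤ m)]
      calc g (m + 1) * (g (m + 1 + 1) * (g (m + 1) * braidDesc g m c))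
          = g (m + 1) * g (m + 1 + 1) * g (m + 1) * braidDesc g m c := by
            simp only [mul_assoc]
        _ = g (m + 1 + 1) * g (m + 1) * g (m + 1 + 1) * braidDesc g m c := by
            rw [hbraid (m + 1) (by omega) hkN]
        _ = g (m + 1 + 1) * (g (m + 1) * (braidDesc g m c * g (m + 1 + 1))) := by
            simp only [mul_assoc, hD.eq]
        _ = g (m + 1 + 1) * (g (m + 1) * braidDesc g m c) * g (m + 1 + 1) := by
            simp only [mul_assoc]
  | succ a hka ih =>
    intro haN
    have hfar : g k * g (a + 1) = g (a + 1) * g k :=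
      hcomm k (a + 1) (by omega) (by omega) (by omega) haN (by omega)
    rw [braidDesc_succ_top g (by omega), ← mul_assoc, hfar, mul_assoc,
      ih (by omega), ← mul_assoc]

include hbraid hcomm in
lemma asc_shift {c k : ℕ} (hc : 1 ≤ c) (hck : c ≤ k) :
    ∀ a, k < a → a ≤ N → braidAsc g c a * g k = g (k + 1) * braidAsc g c a := by
  intro a hka
  induction a, hka using Nat.le_induction with
  | base =>
    intro hkN
    rcases eq_or_lt_of_le hck with rfl | hlt
    · rw [braidAsc_succ_top g (by omega), braidAsc_self]
      simp only [← mul_assoc]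
      exact hbraid c hc hkN
    · obtain ⟨m, rfl⟩ : ∃ m, k = m + 1 := ⟨k - 1, by omega⟩
      have hU : Commute (g (m + 1 + 1)) (braidAsc g c m) :=
        comm_asc g N hcomm hc (by omega) hkN m (by omega) (by omega) (by omega)
      rw [braidAsc_succ_top g (by omega), braidAsc_succ_top g (by omega : c ≤ m + 1)]
      calc braidAsc g c m * g (m + 1) * g (m + 1 + 1) * g (m + 1)
          = braidAsc g c m * (g (m + 1) * g (m + 1 + 1) * g (m + 1)) := by
            simp only [mul_assoc]
        _ = braidAsc g c m * (g (m + 1 + 1) * g (m + 1) * g (m + 1 + 1)) := by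
            rw [hbraid (m + 1) (by omega) hkN]
        _ = g (m + 1 + 1) * (braidAsc g c m * g (m + 1) * g (m + 1 + 1)) := by
            simp only [← mul_assoc, hU.symm.eq]
  | succ a hka ih =>
    intro haN
    have hfar : g (a + 1) * g k = g k * g (a + 1) :=
      hcomm (a + 1) k (by omega) (by omega) haN (by omega) (by omega)
    rw [braidAsc_succ_top g (by omega), mul_assoc, hfar, ← mul_assoc,
      ih (by omega), mul_assoc]

include hbraid hcomm in
lemma asc_mul_desc {a c d : ℕ} (hc : 1 ≤ c) (hcd : c ≤ d) (haN : a + 1 ≤ N) :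
    ∀ e, d ≤ e → e ≤ a →
      braidAsc g d e * braidDesc g (a + 1) c = braidDesc g (a + 1) c * braidAsc g (d + 1) (e + 1) := by
  intro e hde
  induction e, hde using Nat.le_induction with
  | base =>
    intro hda
    rw [braidAsc_self, braidAsc_self]
    exact desc_shift g N hbraid hcomm hc (by omega) (a + 1) (by omega) haN
  | succ e hde ih =>
    intro hea
    rw [braidAsc_succ_top g (by omega), mul_assoc,
      desc_shift g N hbraid hcomm hc (by omega) (a + 1) (by omega) haN,
      ← mul_assoc, ih (by omega), mul_assoc, ← braidAsc_succ_top g (by omega)]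

include hbraid hcomm in
lemma desc_mul_desc {a c d : ℕ} (hc : 1 ≤ c) (hcd : c ≤ d) (haN : a + 1 ≤ N) :
    ∀ e, d ≤ e → e ≤ a →
      braidDesc g e d * braidDesc g (a + 1) c = braidDesc g (a + 1) c * braidDesc g (e + 1) (d + 1) := by
  intro e hde
  induction e, hde using Nat.le_induction with
  | base =>
    intro hda
    rw [braidDesc_self, braidDesc_self]
    exact desc_shift g N hbraid hcomm hc (by omega) (a + 1) (by omega) haN
  | succ e hde ih =>
    intro hea
    rw [braidDesc_succ_top g (by omega), mul_assoc, ih (by omega), ← mul_assoc,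
      desc_shift g N hbraid hcomm hc (by omega) (a + 1) (by omega) haN,
      mul_assoc, ← braidDesc_succ_top g (by omega)]

include hbraid hcomm in
lemma asc_mul_asc {a c d : ℕ} (hc : 1 ≤ c) (hcd : c ≤ d) (haN : a + 1 ≤ N) :
    ∀ e, d ≤ e → e ≤ a →
      braidAsc g (d + 1) (e + 1) * braidAsc g c (a + 1) = braidAsc g c (a + 1) * braidAsc g d e := by
  intro e hde
  induction e, hde using Nat.le_induction with
  | base =>
    intro hda
    rw [braidAsc_self, braidAsc_self]
    exact (asc_shift g N hbraid hcomm hc (by omega) (a + 1) (by omega) haN).symm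
  | succ e hde ih =>
    intro hea
    rw [braidAsc_succ_top g (by omega), mul_assoc,
      ← asc_shift g N hbraid hcomm hc (by omega) (a + 1) (by omega) haN,
      ← mul_assoc, ih (by omega), mul_assoc, ← braidAsc_succ_top g (by omega)]

include hbraid hcomm in
lemma crux {a c : ℕ} (hc : 1 ≤ c) (hca : c ≤ a) (haN : a + 1 ≤ N) :
    braidDesc g a c * braidAsc g c a * (braidDesc g (a + 1) c * braidAsc g c (a + 1)) =
      braidDesc g (a + 1) c * braidAsc g c (a + 1) * (braidDesc g a c * braidAsc g c a) := by
  set D1 := braidDesc g a c with hD1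
  set U1 := braidAsc g c a with hU1
  set D2 := braidDesc g (a + 1) c with hD2
  set U2 := braidAsc g c (a + 1) with hU2
  set A := braidAsc g (c + 1) (a + 1) with hA
  set D' := braidDesc g (a + 1) (c + 1) with hD'
  have key1 : U1 * D2 = D2 * A :=
    asc_mul_desc g N hbraid hcomm hc le_rfl haN a hca le_rfl
  have key2 : D1 * D2 = D2 * D' := by
    have := desc_mul_desc g N hbraid hcomm hc le_rfl haN a hca le_rfl
    rw [this, hD']
  have key3 : A * U2 = U2 * U1 :=
    asc_mul_asc g N hbraid hcomm hc le_rfl haN a hca le_rfl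
  have key4 : D' * g c = D2 := (braidDesc_bot g (by omega)).symm
  have key5 : U2 = g c * A := braidAsc_bot g (by omega)
  have key6 : g (a + 1) * D1 = D2 := (braidDesc_succ_top g hca).symm
  have key7 : U2 = U1 * g (a + 1) := braidAsc_succ_top g (by omega)
  have lhs : D1 * U1 * (D2 * U2) = D2 * (D2 * (A * U1)) := by
    calc D1 * U1 * (D2 * U2) = D1 * ((U1 * D2) * U2) := by simp only [mul_assoc]
      _ = D1 * (D2 * (A * U2)) := by rw [key1, mul_assoc]
      _ = (D1 * D2) * (A * U2) := by simp only [mul_assoc]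
      _ = (D2 * D') * (U2 * U1) := by rw [key2, key3]
      _ = D2 * ((D' * g c) * (A * U1)) := by rw [key5]; simp only [mul_assoc]
      _ = D2 * (D2 * (A * U1)) := by rw [key4]
  have rhs : D2 * U2 * (D1 * U1) = D2 * (D2 * (A * U1)) := by
    calc D2 * U2 * (D1 * U1) = D2 * (U1 * ((g (a + 1) * D1) * U1)) := by
          rw [key7]; simp only [mul_assoc]
      _ = D2 * ((U1 * D2) * U1) := by rw [key6]; simp only [mul_assoc]
      _ = D2 * (D2 * (A * U1)) := by rw [key1]; simp only [mul_assoc]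
  rw [lhs, rhs]

include hcomm in
lemma comm_P_g {a c j : ℕ} (hc : 1 ≤ c) (hca : c ≤ a) (haN : a ≤ N)
    (hj : a + 2 ≤ j) (hjN : j ≤ N) :
    Commute (braidDesc g a c * braidAsc g c a) (g j) :=
  Commute.mul_left (comm_desc g N hcomm hc (by omega) hjN a hca haN (Or.inl hj)).symm
    (comm_asc g N hcomm hc (by omega) hjN a hca haN (Or.inl hj)).symm

include hbraid hcomm in
lemma comm_P {a c : ℕ} (hc : 1 ≤ c) (hca : c ≤ a) (haN : a ≤ N) :
    ∀ b, a ≤ b → b ≤ N →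
      Commute (braidDesc g a c * braidAsc g c a) (braidDesc g b c * braidAsc g c b) := by
  intro b hab
  induction b, hab using Nat.le_induction with
  | base => exact fun _ => Commute.refl _
  | succ b hab ih =>
    intro hbN
    rcases eq_or_lt_of_le hab with rfl | hlt
    · exact crux g N hbraid hcomm hc hca hbN
    · have hsplit : braidDesc g (b + 1) c * braidAsc g c (b + 1) =
          g (b + 1) * (braidDesc g b c * braidAsc g c b) * g (b + 1) := by
        rw [braidDesc_succ_top g (by omega), braidAsc_succ_top g (by omega)]
        simp only [mul_assoc]
      rw [hsplit]
      have hg : Commute (braidDesc g a c * braidAsc g c a) (g (b + 1)) :=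
        comm_P_g g N hcomm hc hca haN (by omega) hbN
      exact (hg.mul_right (ih (by omega))).mul_right hg

end

/-- Let `M` be a monoid, `N ≥ 1`, and let `g 1, …, g N` satisfy the
type-A braid relations.  For all `a, b, c` with `N ≥ a ≥ c ≥ 1` and `N ≥ b ≥ c`, the
element `D(a,c)·U(c,a)` commutes with `D(b,c)·U(c,b)`. -/
theorem braidDesc_mul_asc_commute
    {M : Type*} [Monoid M] (N : ℕ) (hN : 1 ≤ N) (g : ℕ → M)
    (hbraid : ∀ k, 1 ≤ k → k + 1 ≤ N →
      g k * g (k + 1) * g k = g (k + 1) * g k * g (k + 1))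
    (hcomm : ∀ i j, 1 ≤ i → 1 ≤ j → i ≤ N → j ≤ N →
      (i + 2 ≤ j ∨ j + 2 ≤ i) → g i * g j = g j * g i)
    (a b c : ℕ) (hc : 1 ≤ c) (hca : c ≤ a) (haN : a ≤ N) (hcb : c ≤ b) (hbN : b ≤ N) :
    Commute (braidDesc g a c * braidAsc g c a) (braidDesc g b c * braidAsc g c b) := by
  rcases le_total a b with hab | hba
  · exact comm_P g N hbraid hcomm hc hca haN b hab hbN
  · exact (comm_P g N hbraid hcomm hc hcb hbN a hba haN).symm
end

section
/- Define c_i := D(i,1)·U(1,i) = (g_i g_{i−1} ⋯ g_1)(g_1 g_2 ⋯ g_i) for 1 ≤ i ≤ N. Then c_i c_j = c_j c_i for all 1 ≤ i, j ≤ N. -/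
/-- The element `c_i := D(i,1)·U(1,i) = (g_i ⋯ g_1)(g_1 ⋯ g_i)`. -/
def braidC {M : Type*} [Monoid M] (g : ℕ → M) (i : ℕ) : M :=
  braidDesc g i 1 * braidAsc g 1 i

section Aux

variable {M : Type*} [Monoid M] (g : ℕ → M)

lemma braidDesc_zero : braidDesc g 0 1 = 1 := by simp [braidDesc]

lemma braidDesc_succ (n : ℕ) : braidDesc g (n+1) 1 = g (n+1) * braidDesc g n 1 := by
  simp [braidDesc, List.range_succ_eq_map, Function.comp_def, Nat.succ_sub_succ]

lemma braidAsc_zero : braidAsc g 1 0 = 1 := by simp [braidAsc]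

lemma braidAsc_succ (n : ℕ) : braidAsc g 1 (n+1) = braidAsc g 1 n * g (n+1) := by
  simp [braidAsc, List.range_succ, Nat.add_comm]

variable (N : ℕ)
variable (hbraid : ∀ k, 1 ≤ k → k + 1 ≤ N →
      g k * g (k + 1) * g k = g (k + 1) * g k * g (k + 1))
variable (hcomm : ∀ i j, 1 ≤ i → 1 ≤ j → i ≤ N → j ≤ N →
      (i + 2 ≤ j ∨ j + 2 ≤ i) → g i * g j = g j * g i)

include hcomm in
/-- A far generator commutes with a descending product of small generators. -/
lemma far_desc : ∀ a m, m ≤ N → a + 2 ≤ m →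
    g m * braidDesc g a 1 = braidDesc g a 1 * g m := by
  intro a
  induction a with
  | zero => intro m _ _; simp [braidDesc_zero]
  | succ n ih =>
    intro m hmN h
    rw [braidDesc_succ, ← mul_assoc,
      hcomm m (n+1) (by omega) (by omega) hmN (by omega) (by omega),
      mul_assoc, ih m hmN (by omega), mul_assoc]

include hcomm in
lemma far_asc : ∀ a m, m ≤ N → a + 2 ≤ m →
    g m * braidAsc g 1 a = braidAsc g 1 a * g m := by
  intro a
  induction a with
  | zero => intro m _ _; simp [braidAsc_zero]
  | succ n ih =>
    intro m hmN h
    rw [braidAsc_succ, ← mul_assoc, ih m hmN (by omega), mul_assoc,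
      hcomm m (n+1) (by omega) (by omega) hmN (by omega) (by omega), mul_assoc]

include hbraid hcomm in
/-- The slide relation `g k · D(j,1) = D(j,1) · g (k+1)` for `1 ≤ k < j ≤ N`. -/
lemma desc_slide : ∀ j k, 1 ≤ k → k + 1 ≤ j → j ≤ N →
    g k * braidDesc g j 1 = braidDesc g j 1 * g (k+1) := by
  intro j
  induction j with
  | zero => intro k _ h _; omega
  | succ n ih =>
    intro k hk1 hkj hjN
    rw [braidDesc_succ]
    rcases Nat.lt_or_ge (k+1) (n+1) with hlt | hge
    · -- k + 2 ≤ n + 1 : g k commutes with g (n+1), then use IH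
      rw [← mul_assoc, hcomm k (n+1) hk1 (by omega) (by omega) hjN (by omega),
        mul_assoc, ih k hk1 (by omega) (by omega), ← mul_assoc]
    · -- k = n
      obtain rfl : k = n := by omega
      obtain ⟨m, rfl⟩ : ∃ m, k = m + 1 := ⟨k - 1, by omega⟩
      rw [braidDesc_succ]
      calc g (m+1) * (g (m+2) * (g (m+1) * braidDesc g m 1))
          = (g (m+1) * g (m+2) * g (m+1)) * braidDesc g m 1 := by
            simp [mul_assoc]
        _ = (g (m+2) * g (m+1) * g (m+2)) * braidDesc g m 1 := by
            rw [hbraid (m+1) (by omega) (by omega)]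
        _ = g (m+2) * g (m+1) * (g (m+2) * braidDesc g m 1) := by
            simp [mul_assoc]
        _ = g (m+2) * g (m+1) * (braidDesc g m 1 * g (m+2)) := by
            rw [far_desc g N hcomm m (m+2) (by omega) (by omega)]
        _ = g (m+2) * (g (m+1) * braidDesc g m 1) * g (m+2) := by
            simp [mul_assoc]

include hbraid hcomm in
/-- The slide relation `U(1,j) · g k = g (k+1) · U(1,j)` for `1 ≤ k < j ≤ N`. -/
lemma asc_slide : ∀ j k, 1 ≤ k → k + 1 ≤ j → j ≤ N →
    braidAsc g 1 j * g k = g (k+1) * braidAsc g 1 j := by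
  intro j
  induction j with
  | zero => intro k _ h _; omega
  | succ n ih =>
    intro k hk1 hkj hjN
    rw [braidAsc_succ]
    rcases Nat.lt_or_ge (k+1) (n+1) with hlt | hge
    · rw [mul_assoc, hcomm (n+1) k (by omega) hk1 hjN (by omega) (by omega),
        ← mul_assoc, ih k hk1 (by omega) (by omega), mul_assoc]
    · obtain rfl : k = n := by omega
      obtain ⟨m, rfl⟩ : ∃ m, k = m + 1 := ⟨k - 1, by omega⟩
      rw [braidAsc_succ]
      calc braidAsc g 1 m * g (m+1) * g (m+2) * g (m+1)
          = braidAsc g 1 m * (g (m+1) * g (m+2) * g (m+1)) := by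
            simp [mul_assoc]
        _ = braidAsc g 1 m * (g (m+2) * (g (m+1) * g (m+2))) := by
            rw [hbraid (m+1) (by omega) (by omega)]; simp [mul_assoc]
        _ = braidAsc g 1 m * g (m+2) * (g (m+1) * g (m+2)) := by
            simp [mul_assoc]
        _ = g (m+2) * braidAsc g 1 m * (g (m+1) * g (m+2)) := by
            rw [← far_asc g N hcomm m (m+2) (by omega) (by omega)]
        _ = g (m+2) * (braidAsc g 1 m * g (m+1) * g (m+2)) := by
            simp [mul_assoc]

include hbraid hcomm in
/-- `g k` commutes with `c_j` for `1 ≤ k < j ≤ N`. -/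
lemma gen_comm_braidC (j k : ℕ) (hk1 : 1 ≤ k) (hkj : k + 1 ≤ j) (hjN : j ≤ N) :
    g k * braidC g j = braidC g j * g k := by
  unfold braidC
  rw [← mul_assoc, desc_slide g N hbraid hcomm j k hk1 hkj hjN, mul_assoc,
    ← asc_slide g N hbraid hcomm j k hk1 hkj hjN, ← mul_assoc]

include hbraid hcomm in
lemma desc_comm_braidC : ∀ i j, i + 1 ≤ j → j ≤ N →
    braidDesc g i 1 * braidC g j = braidC g j * braidDesc g i 1 := by
  intro i
  induction i with
  | zero => intro j _ _; simp [braidDesc_zero]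
  | succ n ih =>
    intro j hij hjN
    rw [braidDesc_succ, mul_assoc, ih j (by omega) hjN, ← mul_assoc,
      gen_comm_braidC g N hbraid hcomm j (n+1) (by omega) (by omega) hjN,
      mul_assoc]

include hbraid hcomm in
lemma asc_comm_braidC : ∀ i j, i + 1 ≤ j → j ≤ N →
    braidAsc g 1 i * braidC g j = braidC g j * braidAsc g 1 i := by
  intro i
  induction i with
  | zero => intro j _ _; simp [braidAsc_zero]
  | succ n ih =>
    intro j hij hjN
    rw [braidAsc_succ, mul_assoc,
      gen_comm_braidC g N hbraid hcomm j (n+1) (by omega) (by omega) hjN,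
      ← mul_assoc, ih j (by omega) hjN, mul_assoc]

include hbraid hcomm in
lemma braidC_comm_of_lt (i j : ℕ) (hij : i < j) (hjN : j ≤ N) :
    braidC g i * braidC g j = braidC g j * braidC g i := by
  show braidDesc g i 1 * braidAsc g 1 i * braidC g j = _
  rw [mul_assoc, asc_comm_braidC g N hbraid hcomm i j (by omega) hjN,
    ← mul_assoc, desc_comm_braidC g N hbraid hcomm i j (by omega) hjN,
    mul_assoc]
  rfl

end Aux

/-- Let `M` be a monoid, `N ≥ 1`, and let `g 1, …, g N` satisfy the
type-A braid relations.  With `c_i := (g_i g_{i−1} ⋯ g_1)(g_1 g_2 ⋯ g_i)`, one has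
`c_i c_j = c_j c_i` for all `1 ≤ i, j ≤ N`. -/
theorem braidC_commute
    {M : Type*} [Monoid M] (N : ℕ) (hN : 1 ≤ N) (g : ℕ → M)
    (hbraid : ∀ k, 1 ≤ k → k + 1 ≤ N →
      g k * g (k + 1) * g k = g (k + 1) * g k * g (k + 1))
    (hcomm : ∀ i j, 1 ≤ i → 1 ≤ j → i ≤ N → j ≤ N →
      (i + 2 ≤ j ∨ j + 2 ≤ i) → g i * g j = g j * g i)
    (i j : ℕ) (hi1 : 1 ≤ i) (hiN : i ≤ N) (hj1 : 1 ≤ j) (hjN : j ≤ N) :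
    braidC g i * braidC g j = braidC g j * braidC g i := by
  rcases lt_trichotomy i j with h | h | h
  · exact braidC_comm_of_lt g N hbraid hcomm i j h hjN
  · rw [h]
  · exact (braidC_comm_of_lt g N hbraid hcomm j i h hiN).symm
end

section
/- With c_i := (g_i g_{i−1} ⋯ g_1)(g_1 g_2 ⋯ g_i) for 1 ≤ i ≤ m−1, one has c_1 c_2 ⋯ c_{m−1} = Γ_m². (This is the braid-relation identity underlying the paper's equation C = γ².) -/
/-- The canonical positive lift `Γ` of the longest elements:
`Γ 1 = 1` and `Γ (k+1) = Γ k · (g_k g_{k−1} ⋯ g_1)`. -/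
def braidGamma {M : Type*} [Monoid M] (g : ℕ → M) : ℕ → M
  | 0 => 1
  | k + 1 => braidGamma g k * braidDesc g k 1

section
variable {M : Type*} [Monoid M] (g : ℕ → M)

lemma desc_nil (a c : ℕ) (h : a < c) : braidDesc g a c = 1 := by
  unfold braidDesc; rw [show a + 1 - c = 0 by omega]; simp

lemma asc_nil (c a : ℕ) (h : a < c) : braidAsc g c a = 1 := by
  unfold braidAsc; rw [show a + 1 - c = 0 by omega]; simp

lemma desc_one (a : ℕ) : braidDesc g a a = g a := by
  unfold braidDesc; rw [show a + 1 - a = 1 by omega]; simp [List.range_succ]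

lemma asc_one (a : ℕ) : braidAsc g a a = g a := by
  unfold braidAsc; rw [show a + 1 - a = 1 by omega]; simp [List.range_succ]

lemma desc_split_bot (a c : ℕ) (h : c ≤ a) :
    braidDesc g a c = braidDesc g a (c + 1) * g c := by
  unfold braidDesc
  rw [show a + 1 - c = (a + 1 - (c+1)) + 1 by omega, List.range_succ, List.map_append,
    List.prod_append]
  simp only [List.map_cons, List.map_nil, List.prod_cons, List.prod_nil, mul_one]
  rw [show a - (a + 1 - (c+1)) = c by omega]

lemma desc_split_top (a c : ℕ) (h : c ≤ a + 1) :
    braidDesc g (a + 1) c = g (a + 1) * braidDesc g a c := by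
  unfold braidDesc
  rw [show a + 1 + 1 - c = (a + 1 - c) + 1 by omega, List.range_succ_eq_map]
  simp only [List.map_cons, List.prod_cons, List.map_map]
  congr 1
  refine congrArg List.prod (List.map_congr_left ?_)
  intro k hk
  simp only [Function.comp_apply, List.mem_range] at *
  congr 1
  omega

lemma asc_split_bot (c a : ℕ) (h : c ≤ a) :
    braidAsc g c a = g c * braidAsc g (c + 1) a := by
  unfold braidAsc
  rw [show a + 1 - c = (a + 1 - (c+1)) + 1 by omega, List.range_succ_eq_map]
  simp only [List.map_cons, List.prod_cons, List.map_map]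
  congr 1
  refine congrArg List.prod (List.map_congr_left ?_)
  intro k hk
  simp only [Function.comp_apply, List.mem_range] at *
  congr 1
  omega

lemma asc_split_top (c a : ℕ) (h : c ≤ a + 1) :
    braidAsc g c (a + 1) = braidAsc g c a * g (a + 1) := by
  unfold braidAsc
  rw [show a + 1 + 1 - c = (a + 1 - c) + 1 by omega, List.range_succ, List.map_append,
    List.prod_append]
  simp only [List.map_cons, List.map_nil, List.prod_cons, List.prod_nil, mul_one]
  rw [show c + (a + 1 - c) = a + 1 by omega]

lemma desc_append (a b c : ℕ) (h1 : c ≤ b + 1) (h2 : b ≤ a) :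
    braidDesc g a c = braidDesc g a (b + 1) * braidDesc g b c := by
  unfold braidDesc
  rw [show a + 1 - c = (a + 1 - (b+1)) + (b + 1 - c) by omega, List.range_add,
    List.map_append, List.prod_append]
  congr 1
  rw [List.map_map]
  refine congrArg List.prod (List.map_congr_left ?_)
  intro k hk
  simp only [Function.comp_apply, List.mem_range] at *
  congr 1
  omega

lemma asc_append (c b a : ℕ) (h1 : c ≤ b + 1) (h2 : b ≤ a) :
    braidAsc g c a = braidAsc g c b * braidAsc g (b + 1) a := by
  unfold braidAsc
  rw [show a + 1 - c = (b + 1 - c) + (a + 1 - (b+1)) by omega, List.range_add,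
    List.map_append, List.prod_append]
  congr 1
  rw [List.map_map]
  refine congrArg List.prod (List.map_congr_left ?_)
  intro k hk
  simp only [Function.comp_apply, List.mem_range] at *
  congr 1
  omega

lemma commute_desc (x : M) (a c : ℕ) (h : ∀ k, c ≤ k → k ≤ a → Commute x (g k)) :
    Commute x (braidDesc g a c) := by
  unfold braidDesc
  apply Commute.list_prod_right
  intro y hy
  simp only [List.mem_map, List.mem_range] at hy
  obtain ⟨k, hk, rfl⟩ := hy
  exact h _ (by omega) (by omega)

lemma commute_asc (x : M) (c a : ℕ) (h : ∀ k, c ≤ k → k ≤ a → Commute x (g k)) :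
    Commute x (braidAsc g c a) := by
  unfold braidAsc
  apply Commute.list_prod_right
  intro y hy
  simp only [List.mem_map, List.mem_range] at hy
  obtain ⟨k, hk, rfl⟩ := hy
  exact h _ (by omega) (by omega)

end

def braidVt {M : Type*} [Monoid M] (g : ℕ → M) : ℕ → M
  | 0 => 1
  | c + 1 => braidAsc g 1 (c + 1) * braidVt g c

section
variable {M : Type*} [Monoid M]

/-- `D(n, e+2) ⋅ A(1, e+1) = A(1, e) ⋅ D(n, e+1)`. -/
lemma braidP (g : ℕ → M) (N : ℕ)
    (hcomm : ∀ i j, 1 ≤ i → 1 ≤ j → i ≤ N → j ≤ N →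
      (i + 2 ≤ j ∨ j + 2 ≤ i) → g i * g j = g j * g i)
    (n e : ℕ) (h1 : e + 2 ≤ n) (h2 : n ≤ N) :
    braidDesc g n (e + 2) * braidAsc g 1 (e + 1) =
      braidAsc g 1 e * braidDesc g n (e + 1) := by
  rw [asc_split_top g 1 e (by omega)]
  have hc : Commute (braidDesc g n (e + 2)) (braidAsc g 1 e) := by
    apply commute_asc
    intro k hk1 hk2
    apply Commute.symm
    apply commute_desc
    intro j hj1 hj2
    exact hcomm k j hk1 (by omega) (by omega) (by omega) (by omega)
  rw [← mul_assoc, hc.eq, mul_assoc]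
  congr 1
  exact (desc_split_bot g n (e + 1) (by omega)).symm

lemma braidPchain (g : ℕ → M) (N : ℕ)
    (hcomm : ∀ i j, 1 ≤ i → 1 ≤ j → i ≤ N → j ≤ N →
      (i + 2 ≤ j ∨ j + 2 ≤ i) → g i * g j = g j * g i)
    (n : ℕ) (h2 : n ≤ N) :
    ∀ c, c + 2 ≤ n →
      braidDesc g n (c + 2) * braidVt g (c + 1) = braidVt g c * braidDesc g n 1 := by
  intro c
  induction c with
  | zero =>
    intro hc
    show braidDesc g n 2 * (braidAsc g 1 1 * braidVt g 0) = braidVt g 0 * braidDesc g n 1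
    rw [show braidVt g 0 = (1 : M) from rfl, mul_one, one_mul]
    have := braidP g N hcomm n 0 (by omega) h2
    rw [asc_nil g 1 0 (by omega), one_mul] at this
    exact this
  | succ c ih =>
    intro hc
    show braidDesc g n (c + 3) * (braidAsc g 1 (c + 2) * braidVt g (c + 1)) =
      braidVt g (c + 1) * braidDesc g n 1
    rw [← mul_assoc, braidP g N hcomm n (c + 1) (by omega) h2, mul_assoc,
      ih (by omega), ← mul_assoc]
    rfl

/-- `A(1, j+1) ⋅ Vt j = Vt j ⋅ D(j+1, 1)`. -/
lemma braidK (g : ℕ → M) (N : ℕ)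
    (hcomm : ∀ i j, 1 ≤ i → 1 ≤ j → i ≤ N → j ≤ N →
      (i + 2 ≤ j ∨ j + 2 ≤ i) → g i * g j = g j * g i)
    (j : ℕ) (h : j + 1 ≤ N) :
    braidAsc g 1 (j + 1) * braidVt g j = braidVt g j * braidDesc g (j + 1) 1 := by
  cases j with
  | zero =>
    show braidAsc g 1 1 * 1 = 1 * braidDesc g 1 1
    rw [asc_one, desc_one, one_mul, mul_one]
  | succ t =>
    rw [asc_split_top g 1 (t + 1) (by omega), mul_assoc]
    rw [show g (t + 2) = braidDesc g (t + 2) (t + 2) from (desc_one g (t + 2)).symm]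
    rw [braidPchain g N hcomm (t + 2) (by omega) t (by omega)]
    rw [← mul_assoc]
    rfl

lemma braidGamma_eq_Vt (g : ℕ → M) (N : ℕ)
    (hcomm : ∀ i j, 1 ≤ i → 1 ≤ j → i ≤ N → j ≤ N →
      (i + 2 ≤ j ∨ j + 2 ≤ i) → g i * g j = g j * g i) :
    ∀ j, j ≤ N → braidGamma g (j + 1) = braidVt g j := by
  intro j
  induction j with
  | zero =>
    intro _
    show braidGamma g 0 * braidDesc g 0 1 = braidVt g 0
    rw [desc_nil g 0 1 (by omega), mul_one]
    rfl
  | succ j ih =>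
    intro hj
    show braidGamma g (j + 1) * braidDesc g (j + 1) 1 = braidVt g (j + 1)
    rw [ih (by omega), ← braidK g N hcomm j hj]
    rfl

lemma braidShiftD (g : ℕ → M) (N : ℕ)
    (hbraid : ∀ k, 1 ≤ k → k + 1 ≤ N → g k * g (k + 1) * g k = g (k + 1) * g k * g (k + 1))
    (hcomm : ∀ i j, 1 ≤ i → 1 ≤ j → i ≤ N → j ≤ N →
      (i + 2 ≤ j ∨ j + 2 ≤ i) → g i * g j = g j * g i)
    (i j : ℕ) (hi : 1 ≤ i) (hij : i + 1 ≤ j) (hj : j ≤ N) :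
    g i * braidDesc g j 1 = braidDesc g j 1 * g (i + 1) := by
  obtain ⟨i, rfl⟩ : ∃ i', i = i' + 1 := ⟨i - 1, by omega⟩
  have hsplit : braidDesc g j 1 =
      braidDesc g j (i + 3) * (g (i + 2) * (g (i + 1) * braidDesc g i 1)) := by
    rw [desc_append g j (i + 2) 1 (by omega) (by omega),
      desc_split_top g (i + 1) 1 (by omega), desc_split_top g i 1 (by omega)]
  have hc1 : Commute (g (i + 1)) (braidDesc g j (i + 3)) := by
    apply commute_desc
    intro k hk1 hk2
    exact hcomm (i + 1) k (by omega) (by omega) (by omega) (by omega) (by omega)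
  have hc2 : Commute (g (i + 2)) (braidDesc g i 1) := by
    apply commute_desc
    intro k hk1 hk2
    exact hcomm (i + 2) k (by omega) (by omega) (by omega) (by omega) (by omega)
  have hb := hbraid (i + 1) (by omega) (by omega)
  calc g (i + 1) * braidDesc g j 1
      = braidDesc g j (i + 3) * (g (i + 1) * g (i + 2) * g (i + 1) * braidDesc g i 1) := by
        rw [hsplit, ← mul_assoc, hc1.eq]
        simp [mul_assoc]
    _ = braidDesc g j (i + 3) * (g (i + 2) * g (i + 1) * (g (i + 2) * braidDesc g i 1)) := by
        rw [hb]; try simp [mul_assoc]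
    _ = braidDesc g j (i + 3) * (g (i + 2) * (g (i + 1) * braidDesc g i 1)) * g (i + 2) := by
        rw [hc2.eq]; try simp [mul_assoc]
    _ = braidDesc g j 1 * g (i + 2) := by rw [← hsplit]

lemma braidShiftA (g : ℕ → M) (N : ℕ)
    (hbraid : ∀ k, 1 ≤ k → k + 1 ≤ N → g k * g (k + 1) * g k = g (k + 1) * g k * g (k + 1))
    (hcomm : ∀ i j, 1 ≤ i → 1 ≤ j → i ≤ N → j ≤ N →
      (i + 2 ≤ j ∨ j + 2 ≤ i) → g i * g j = g j * g i)
    (i j : ℕ) (hi : 1 ≤ i) (hij : i + 1 ≤ j) (hj : j ≤ N) :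
    g (i + 1) * braidAsc g 1 j = braidAsc g 1 j * g i := by
  obtain ⟨i, rfl⟩ : ∃ i', i = i' + 1 := ⟨i - 1, by omega⟩
  have hsplit : braidAsc g 1 j =
      braidAsc g 1 i * (g (i + 1) * (g (i + 2) * braidAsc g (i + 3) j)) := by
    rw [asc_append g 1 i j (by omega) (by omega),
      asc_split_bot g (i + 1) j (by omega), asc_split_bot g (i + 2) j (by omega)]
  have hc1 : Commute (g (i + 2)) (braidAsc g 1 i) := by
    apply commute_asc
    intro k hk1 hk2
    exact hcomm (i + 2) k (by omega) (by omega) (by omega) (by omega) (by omega)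
  have hc2 : Commute (g (i + 1)) (braidAsc g (i + 3) j) := by
    apply commute_asc
    intro k hk1 hk2
    exact hcomm (i + 1) k (by omega) (by omega) (by omega) (by omega) (by omega)
  have hb := hbraid (i + 1) (by omega) (by omega)
  calc g (i + 2) * braidAsc g 1 j
      = braidAsc g 1 i * (g (i + 2) * g (i + 1) * g (i + 2) * braidAsc g (i + 3) j) := by
        rw [hsplit, ← mul_assoc, hc1.eq]
        simp [mul_assoc]
    _ = braidAsc g 1 i * (g (i + 1) * (g (i + 2) * (g (i + 1) * braidAsc g (i + 3) j))) := by
        rw [← hb]; try simp [mul_assoc]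
    _ = braidAsc g 1 i * (g (i + 1) * (g (i + 2) * braidAsc g (i + 3) j)) * g (i + 1) := by
        rw [hc2.eq]; try simp [mul_assoc]
    _ = braidAsc g 1 j * g (i + 1) := by rw [← hsplit]

lemma braidCentral (g : ℕ → M) (N : ℕ)
    (hbraid : ∀ k, 1 ≤ k → k + 1 ≤ N → g k * g (k + 1) * g k = g (k + 1) * g k * g (k + 1))
    (hcomm : ∀ i j, 1 ≤ i → 1 ≤ j → i ≤ N → j ≤ N →
      (i + 2 ≤ j ∨ j + 2 ≤ i) → g i * g j = g j * g i)
    (i j : ℕ) (hi : 1 ≤ i) (hij : i + 1 ≤ j) (hj : j ≤ N) :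
    Commute (g i) (braidDesc g j 1 * braidAsc g 1 j) := by
  show g i * _ = _ * g i
  rw [← mul_assoc, braidShiftD g N hbraid hcomm i j hi hij hj, mul_assoc,
    braidShiftA g N hbraid hcomm i j hi hij hj, mul_assoc]

lemma braidVtComm (g : ℕ → M) (N : ℕ)
    (hbraid : ∀ k, 1 ≤ k → k + 1 ≤ N → g k * g (k + 1) * g k = g (k + 1) * g k * g (k + 1))
    (hcomm : ∀ i j, 1 ≤ i → 1 ≤ j → i ≤ N → j ≤ N →
      (i + 2 ≤ j ∨ j + 2 ≤ i) → g i * g j = g j * g i)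
    (j : ℕ) (hj : j ≤ N) :
    ∀ t, t + 1 ≤ j → Commute (braidVt g t) (braidDesc g j 1 * braidAsc g 1 j) := by
  intro t
  induction t with
  | zero => intro _; exact Commute.one_left _
  | succ t ih =>
    intro ht
    show Commute (braidAsc g 1 (t + 1) * braidVt g t) _
    apply Commute.mul_left _ (ih (by omega))
    apply Commute.symm
    apply commute_asc
    intro k hk1 hk2
    exact (braidCentral g N hbraid hcomm k j hk1 (by omega) hj).symm

end


/-- Let `M` be a monoid, `m ≥ 2`, and let `g 1, …, g (m−1)` satisfy the
type-A braid relations.  With `c_i := (g_i ⋯ g_1)(g_1 ⋯ g_i)`, one has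
`c_1 c_2 ⋯ c_{m−1} = Γ_m²` — the braid identity underlying `C = γ²`. -/
theorem braidC_prod_eq_gamma_sq
    {M : Type*} [Monoid M] (m : ℕ) (hm : 2 ≤ m) (g : ℕ → M)
    (hbraid : ∀ k, 1 ≤ k → k + 1 ≤ m - 1 →
      g k * g (k + 1) * g k = g (k + 1) * g k * g (k + 1))
    (hcomm : ∀ i j, 1 ≤ i → 1 ≤ j → i ≤ m - 1 → j ≤ m - 1 →
      (i + 2 ≤ j ∨ j + 2 ≤ i) → g i * g j = g j * g i) :
    ((List.range (m - 1)).map fun k => braidDesc g (k + 1) 1 * braidAsc g 1 (k + 1)).prod =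
      braidGamma g m * braidGamma g m := by
  set N := m - 1 with hN
  have key : ∀ j, j ≤ N →
      ((List.range j).map fun k => braidDesc g (k + 1) 1 * braidAsc g 1 (k + 1)).prod =
        braidGamma g (j + 1) * braidVt g j := by
    intro j
    induction j with
    | zero =>
      intro _
      simp only [List.range_zero, List.map_nil, List.prod_nil]
      show (1 : M) = braidGamma g 0 * braidDesc g 0 1 * braidVt g 0
      rw [desc_nil g 0 1 (by omega)]
      show (1 : M) = 1 * 1 * 1
      simp
    | succ j ih =>
      intro hj
      rw [List.range_succ, List.map_append, List.prod_append]
      simp only [List.map_cons, List.map_nil, List.prod_cons, List.prod_nil, mul_one]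
      rw [ih (by omega)]
      have hcmt := braidVtComm g N hbraid hcomm (j + 1) hj j (by omega)
      calc braidGamma g (j + 1) * braidVt g j * (braidDesc g (j + 1) 1 * braidAsc g 1 (j + 1))
          = braidGamma g (j + 1) * (braidVt g j * (braidDesc g (j + 1) 1 * braidAsc g 1 (j + 1))) := by
            rw [mul_assoc]
        _ = braidGamma g (j + 1) * ((braidDesc g (j + 1) 1 * braidAsc g 1 (j + 1)) * braidVt g j) := by
            rw [hcmt.eq]
        _ = (braidGamma g (j + 1) * braidDesc g (j + 1) 1) * (braidAsc g 1 (j + 1) * braidVt g j) := by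
            simp [mul_assoc]
        _ = braidGamma g (j + 1 + 1) * braidVt g (j + 1) := rfl
  have h1 := key N le_rfl
  have h2 : N + 1 = m := by omega
  rw [h2] at h1
  rw [h1, ← braidGamma_eq_Vt g N hcomm N le_rfl, h2]
end
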